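/- For k ≥ 1 real, λ ≠ 0, X ≥ 2 and 1/X ≤ P/X ≤ 1, ∫_{−P/X}^{P/X} |T₁(λ₂α)|² |T_k(λ₃α)|² dα ≪ X^{1+2/k}, where T_j(α) = ∫_{(δX)^{1/j}}^{X^{1/j}} e(t^jα) dt. -/

import Mathlib

open MeasureTheory Finset
open scoped Classical
noncomputable section

/-- `e(x) = e^{2πix}` -/
def e2 (x : ℝ) : ℂ := Complex.exp (2 * Real.pi * Complex.I * (x : ℂ))

/-- Fejér-type kernel `K_η(α) = (sin(πηα)/(πα))²`, with `K_η(0) = η²`. -/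
def Keta (η α : ℝ) : ℝ :=
  if α = 0 then η ^ 2 else (Real.sin (Real.pi * η * α) / (Real.pi * α)) ^ 2

/-- `S_k(α) = Σ_{δX ≤ p^k ≤ X} log p · e(p^k α)` over primes `p`. -/
def Skp (k δ X α : ℝ) : ℂ :=
  ∑ p ∈ Finset.range (⌊X⌋₊ + 1),
    if p.Prime ∧ δ * X ≤ (p : ℝ) ^ k ∧ (p : ℝ) ^ k ≤ X
      then (Real.log p : ℂ) * e2 ((p : ℝ) ^ k * α) else 0

/-- `S₁(α) = Σ_{δX ≤ p ≤ X} log p · e(pα)` over primes `p`. -/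
def Ssum (δ X α : ℝ) : ℂ :=
  ∑ p ∈ Finset.range (⌊X⌋₊ + 1),
    if p.Prime ∧ δ * X ≤ (p : ℝ) ∧ (p : ℝ) ≤ X
      then (Real.log p : ℂ) * e2 ((p : ℝ) * α) else 0

/-- `S(α) = Σ_{p ≤ X} log p · e(pα)` over primes `p`. -/
def Sfull (X α : ℝ) : ℂ :=
  ∑ p ∈ Finset.range (⌊X⌋₊ + 1),
    if p.Prime ∧ (p : ℝ) ≤ X then (Real.log p : ℂ) * e2 ((p : ℝ) * α) else 0

/-- `U_k(α) = Σ_{δX ≤ n^k ≤ X} e(n^k α)` over positive integers `n`. -/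
def Uk (k δ X α : ℝ) : ℂ :=
  ∑ n ∈ Finset.range (⌊X⌋₊ + 1),
    if 1 ≤ n ∧ δ * X ≤ (n : ℝ) ^ k ∧ (n : ℝ) ^ k ≤ X
      then e2 ((n : ℝ) ^ k * α) else 0

/-- `T_k(α) = ∫_{(δX)^{1/k}}^{X^{1/k}} e(t^k α) dt`. -/
def Tk (k δ X α : ℝ) : ℂ :=
  ∫ t in (δ * X) ^ (1 / k)..(X ^ (1 / k)), e2 (t ^ k * α)

/-- Chebyshev function `θ(t) = Σ_{p ≤ t} log p`. -/
def chebθ (t : ℝ) : ℝ :=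
  ∑ p ∈ Finset.range (⌊t⌋₊ + 1), if p.Prime then Real.log p else 0

/-- Generalized Selberg integral `J_k(X,h)`. -/
def Jsel (k X h : ℝ) : ℝ :=
  ∫ x in X..(2 * X),
    (chebθ ((x + h) ^ (1 / k)) - chebθ (x ^ (1 / k)) - ((x + h) ^ (1 / k) - x ^ (1 / k))) ^ 2

lemma e2_norm (x : ℝ) : ‖e2 x‖ = 1 := by
  rw [e2, show 2 * (Real.pi:ℂ) * Complex.I * x = ((2*Real.pi*x : ℝ):ℂ) * Complex.I by push_cast; ring,
    Complex.norm_exp_ofReal_mul_I]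

lemma Tk_trivial (k δ X β : ℝ) (hk : 1 ≤ k) (hδ : 0 ≤ δ) (hδ1 : δ ≤ 1) (hX : 0 ≤ X) :
    ‖Tk k δ X β‖ ≤ X ^ (1/k) := by
  have h0 : (0:ℝ) ≤ (δ*X) ^ ((1:ℝ)/k) := Real.rpow_nonneg (by positivity) _
  have h1 : (δ*X) ^ ((1:ℝ)/k) ≤ X ^ ((1:ℝ)/k) :=
    Real.rpow_le_rpow (by positivity) (by nlinarith) (by positivity)
  have := intervalIntegral.norm_integral_le_of_norm_le_const
    (a := (δ*X)^((1:ℝ)/k)) (b := X^((1:ℝ)/k)) (C := 1)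
    (f := fun t => e2 (t ^ k * β)) (fun x _ => le_of_eq (e2_norm _))
  rw [Tk]
  refine this.trans ?_
  rw [one_mul, abs_of_nonneg (by linarith)]
  linarith

lemma T1_bound (δ X β : ℝ) (hβ : β ≠ 0) : ‖Tk 1 δ X β‖ ≤ 1/(Real.pi*|β|) := by
  have hc : (2*(Real.pi:ℂ)*Complex.I*β) ≠ 0 := by
    simp [Complex.ext_iff, Real.pi_ne_zero, hβ]
  have heq : Tk 1 δ X β = ∫ t in (δ*X)..X, Complex.exp ((2*(Real.pi:ℂ)*Complex.I*β) * t) := by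
    rw [Tk]
    norm_num [Real.rpow_one]
    apply intervalIntegral.integral_congr
    intro t _
    simp only [e2]
    congr 1
    push_cast
    ring
  rw [heq, integral_exp_mul_complex hc]
  have hn : ∀ y : ℝ, ‖Complex.exp ((2*(Real.pi:ℂ)*Complex.I*β) * y)‖ = 1 := by
    intro y
    rw [show (2*(Real.pi:ℂ)*Complex.I*β) * y = ((2*Real.pi*β*y : ℝ):ℂ) * Complex.I by push_cast; ring,
      Complex.norm_exp_ofReal_mul_I]
  rw [norm_div]
  have hnc : ‖(2*(Real.pi:ℂ)*Complex.I*β)‖ = 2*Real.pi*|β| := by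
    simp [norm_mul, Complex.norm_real, Real.pi_pos.le, abs_of_nonneg,
      abs_of_nonneg Real.pi_pos.le]
  rw [hnc]
  have h2 : ‖Complex.exp (2*(Real.pi:ℂ)*Complex.I*β * X) - Complex.exp (2*(Real.pi:ℂ)*Complex.I*β * ((δ*X:ℝ):ℂ))‖ ≤ 2 := by
    calc _ ≤ ‖Complex.exp (2*(Real.pi:ℂ)*Complex.I*β * X)‖ + ‖Complex.exp (2*(Real.pi:ℂ)*Complex.I*β * ((δ*X:ℝ):ℂ))‖ := norm_sub_le _ _
    _ ≤ 2 := by rw [hn, hn]; norm_num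
  have hp : 0 < Real.pi * |β| := by positivity
  rw [div_le_div_iff₀ (by positivity) hp]
  nlinarith


set_option maxHeartbeats 1000000

theorem stmt13 (k δ : ℝ) (hk : 1 ≤ k) (hδ0 : 0 < δ) (hδ1 : δ < 1)
    (l2 l3 : ℝ) (h2 : l2 ≠ 0) (h3 : l3 ≠ 0) :
    ∃ C > (0 : ℝ), ∀ X ≥ (2 : ℝ), ∀ P : ℝ, 1 ≤ P → P ≤ X →
      (∫ α in (-(P / X))..(P / X), ‖Tk 1 δ X (l2 * α)‖ ^ 2 * ‖Tk k δ X (l3 * α)‖ ^ 2)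
        ≤ C * X ^ (1 + 2 / k) := by
  have hπ := Real.pi_pos
  have hl2 : 0 < |l2| := abs_pos.mpr h2
  refine ⟨2/|l2|, by positivity, ?_⟩
  intro X hX P hP hPX
  have hX0 : (0:ℝ) < X := by linarith
  set a : ℝ := -(P/X) with ha
  set b : ℝ := P/X with hb
  have hb0 : 0 ≤ b := by positivity
  have hab : a ≤ b := by rw [ha, hb]; linarith
  set B : ℝ := Real.pi * |l2| * X with hB
  have hB0 : 0 < B := by positivity
  set D : ℝ := X^2 * X^((2:ℝ)/k) with hD
  have hD0 : 0 < D := by positivity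
  set g : ℝ → ℝ := fun α => 2*D/(1+(B*α)^2) with hg
  -- pointwise bound
  have pt : ∀ t : ℝ, ‖‖Tk 1 δ X (l2*t)‖^2 * ‖Tk k δ X (l3*t)‖^2‖ ≤ g t := by
    intro t
    rw [Real.norm_of_nonneg (by positivity)]
    have hkk : ‖Tk k δ X (l3*t)‖^2 ≤ X^((2:ℝ)/k) := by
      have h1 := Tk_trivial k δ X (l3*t) hk hδ0.le hδ1.le hX0.le
      calc ‖Tk k δ X (l3*t)‖^2 ≤ (X^((1:ℝ)/k))^2 :=
            pow_le_pow_left₀ (norm_nonneg _) h1 2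
        _ = X^((2:ℝ)/k) := by
            rw [← Real.rpow_natCast (X^((1:ℝ)/k)) 2, ← Real.rpow_mul hX0.le]
            congr 1; push_cast; ring
    have hone : ‖Tk 1 δ X (l2*t)‖^2 * (1+(B*t)^2) ≤ 2*X^2 := by
      have h1X : ‖Tk 1 δ X (l2*t)‖ ≤ X := by
        have := Tk_trivial 1 δ X (l2*t) le_rfl hδ0.le hδ1.le hX0.le
        norm_num [Real.rpow_one] at this
        exact this
      rcases le_or_gt (|B*t|) 1 with hcase | hcase
      · have h2' : (B*t)^2 ≤ 1 := by nlinarith [abs_nonneg (B*t), sq_abs (B*t)]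
        nlinarith [norm_nonneg (Tk 1 δ X (l2*t)), sq_nonneg (B*t)]
      · have ht0 : t ≠ 0 := by
          rintro rfl
          simp at hcase; linarith
        have hl2t : l2*t ≠ 0 := mul_ne_zero h2 ht0
        have hbnd := T1_bound δ X (l2*t) hl2t
        have hpos : 0 < Real.pi*|l2*t| := by
          have := abs_pos.mpr hl2t; positivity
        have hsq : ‖Tk 1 δ X (l2*t)‖^2 ≤ (1/(Real.pi*|l2*t|))^2 :=
          pow_le_pow_left₀ (norm_nonneg _) hbnd 2
        have h2s : 1 + (B*t)^2 ≤ 2*(B*t)^2 := by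
          nlinarith [sq_abs (B*t)]
        have key : (B*t)^2 = (Real.pi*|l2*t|)^2 * X^2 := by
          have e1 : |l2*t|^2 = l2^2*t^2 := by rw [sq_abs]; ring
          have e2 : |l2|^2 = l2^2 := sq_abs l2
          rw [hB]
          linear_combination Real.pi^2*X^2*t^2 * e2 - Real.pi^2*X^2 * e1
        calc ‖Tk 1 δ X (l2*t)‖^2 * (1+(B*t)^2)
            ≤ (1/(Real.pi*|l2*t|))^2 * (2*(B*t)^2) :=
              mul_le_mul hsq h2s (by positivity) (by positivity)
          _ = 2*X^2 := by rw [key]; field_simp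
    have hd : (0:ℝ) < 1+(B*t)^2 := by positivity
    rw [hg]
    simp only
    rw [le_div_iff₀ hd]
    calc ‖Tk 1 δ X (l2*t)‖^2 * ‖Tk k δ X (l3*t)‖^2 * (1+(B*t)^2)
        = (‖Tk 1 δ X (l2*t)‖^2 * (1+(B*t)^2)) * ‖Tk k δ X (l3*t)‖^2 := by ring
      _ ≤ (2*X^2) * X^((2:ℝ)/k) :=
          mul_le_mul hone hkk (by positivity) (by positivity)
      _ = 2*D := by rw [hD]; ring
  -- integrability of g
  have hgc : Continuous g := by
    apply continuous_const.div
    · fun_prop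
    · intro x; positivity
  have hg_int : IntervalIntegrable g MeasureTheory.volume a b := hgc.intervalIntegrable _ _
  have step := intervalIntegral.norm_integral_le_abs_of_norm_le
    (μ := MeasureTheory.volume) (a := a) (b := b)
    (f := fun α => ‖Tk 1 δ X (l2*α)‖^2 * ‖Tk k δ X (l3*α)‖^2)
    (Filter.Eventually.of_forall (fun t => pt t)) hg_int
  -- compute ∫ g
  have hgval : (∫ α in a..b, g α) = (2*D) * (B⁻¹ * (Real.arctan (B*b) - Real.arctan (B*a))) := by
    have : (∫ α in a..b, g α) = (2*D) * ∫ α in a..b, (fun x => 1/(1+x^2)) (B*α) := by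
      rw [← intervalIntegral.integral_const_mul]
      apply intervalIntegral.integral_congr
      intro x _
      rw [hg]; simp only
      field_simp
    rw [this, intervalIntegral.integral_comp_mul_left (fun x => 1/(1+x^2)) hB0.ne',
      integral_one_div_one_add_sq, smul_eq_mul]
  have harc : |Real.arctan (B*b) - Real.arctan (B*a)| ≤ Real.pi := by
    have h1 := Real.arctan_lt_pi_div_two (B*b)
    have h2 := Real.neg_pi_div_two_lt_arctan (B*b)
    have h3 := Real.arctan_lt_pi_div_two (B*a)
    have h4 := Real.neg_pi_div_two_lt_arctan (B*a)
    rw [abs_le]; constructor <;> linarith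
  have hfinal : |∫ α in a..b, g α| ≤ (2/|l2|) * X^(1+2/k) := by
    rw [hgval]
    have hXk : X^((1:ℝ)+2/k) = X * X^((2:ℝ)/k) := by
      rw [Real.rpow_add hX0, Real.rpow_one]
    rw [abs_mul (2*D), abs_mul B⁻¹, abs_of_nonneg (by positivity : (0:ℝ) ≤ 2*D),
      abs_of_nonneg (by positivity : (0:ℝ) ≤ B⁻¹)]
    calc 2*D * (B⁻¹ * |Real.arctan (B*b) - Real.arctan (B*a)|)
        ≤ 2*D * (B⁻¹ * Real.pi) := by
          apply mul_le_mul_of_nonneg_left _ (by positivity)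
          exact mul_le_mul_of_nonneg_left harc (by positivity)
      _ = (2/|l2|) * X^(1+2/k) := by
          rw [hXk, hD, hB]
          field_simp
  calc (∫ α in a..b, ‖Tk 1 δ X (l2*α)‖^2 * ‖Tk k δ X (l3*α)‖^2)
      ≤ ‖∫ α in a..b, ‖Tk 1 δ X (l2*α)‖^2 * ‖Tk k δ X (l3*α)‖^2‖ := by
        rw [Real.norm_eq_abs]; exact le_abs_self _
    _ ≤ |∫ α in a..b, g α| := step
    _ ≤ (2/|l2|) * X^(1+2/k) := hfinal

end
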